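/- The family of almost symmetric monomials m_{(λ|μ)}, indexed over all pairs consisting of a strict composition λ and a partition μ, is linearly independent over K in MvPowerSeries ℕ K. -/

import Mathlib

/-!
Almost symmetric monomials in `MvPowerSeries ℕ K`.
-/

noncomputable section

/-- A strict composition: a finite tuple of nonnegative integers whose last entry (if any)
is positive. -/
def StrictComp : Type := {l : List ℕ // ∀ h : l ≠ [], l.getLast h ≠ 0}

/-- A partition: a weakly decreasing finite tuple of positive integers. -/
def PartitionL : Type := {l : List ℕ // l.Pairwise (· ≥ ·) ∧ ∀ x ∈ l, 0 < x}

open Classical in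
/-- The almost symmetric monomial `m_{(λ|μ)}`: its coefficient at an exponent `d : ℕ →₀ ℕ`
is `1` if `d_i = λ_i` for all `i < ℓ(λ)` and the multiset of nonzero values `d_j`, `j ≥ ℓ(λ)`
(with multiplicity), equals the multiset of parts of `μ`; and `0` otherwise. -/
def asm (K : Type*) [Field K] (lam mu : List ℕ) : MvPowerSeries ℕ K :=
  fun d : ℕ →₀ ℕ =>
    if (∀ i : ℕ, ∀ h : i < lam.length, d i = lam.get ⟨i, h⟩) ∧
        (d.support.filter (fun j => lam.length ≤ j)).val.map d = (↑mu : Multiset ℕ) then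
      (1 : K)
    else 0


def expN (lam mu : List ℕ) (N : ℕ) : ℕ →₀ ℕ :=
  Finsupp.onFinset (Finset.range (N + mu.length + lam.length))
    (fun i => if i < lam.length then lam.getD i 0
      else if N ≤ i ∧ i < N + mu.length then mu.getD (i - N) 0 else 0)
    (fun i hi => by
      simp only [Finset.mem_range]
      by_contra hcon
      push_neg at hcon
      have h1 : ¬ i < lam.length := by omega
      have h2 : ¬ (N ≤ i ∧ i < N + mu.length) := by omega
      simp only [if_neg h1, if_neg h2] at hi
      exact hi rfl)

lemma expN_apply (lam mu : List ℕ) (N i : ℕ) :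
    expN lam mu N i = if i < lam.length then lam.getD i 0
      else if N ≤ i ∧ i < N + mu.length then mu.getD (i - N) 0 else 0 := rfl

lemma list_map_range_getD (l : List ℕ) :
    (List.range l.length).map (fun k => l.getD k 0) = l := by
  apply List.ext_getElem
  · simp
  · intro i h1 h2
    simp only [List.getElem_map, List.getElem_range]
    exact List.getD_eq_getElem _ _ h2

lemma filt (lam mu : List ℕ) (N : ℕ) (hN : lam.length ≤ N) (hmu : ∀ x ∈ mu, 0 < x) :
    ((expN lam mu N).support.filter (fun j => lam.length ≤ j)).val.map (expN lam mu N)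
      = (↑mu : Multiset ℕ) := by
  have hval : ∀ k < mu.length, expN lam mu N (N + k) = mu.getD k 0 := by
    intro k hk
    rw [expN_apply, if_neg (by omega), if_pos ⟨by omega, by omega⟩,
      show N + k - N = k from by omega]
  have hset : (expN lam mu N).support.filter (fun j => lam.length ≤ j)
      = (Finset.range mu.length).map ⟨fun k => N + k, add_right_injective N⟩ := by
    ext j
    simp only [Finset.mem_filter, Finsupp.mem_support_iff, Finset.mem_map,
      Finset.mem_range, Function.Embedding.coeFn_mk]
    constructor
    · rintro ⟨hne, hle⟩
      rw [expN_apply, if_neg (by omega)] at hne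
      by_cases hc : N ≤ j ∧ j < N + mu.length
      · exact ⟨j - N, by omega, by omega⟩
      · rw [if_neg hc] at hne; exact absurd rfl hne
    · rintro ⟨k, hk, rfl⟩
      refine ⟨?_, by omega⟩
      rw [hval k hk, List.getD_eq_getElem _ _ hk]
      exact (hmu _ (List.getElem_mem hk)).ne'
  rw [hset, Finset.map_val, Multiset.map_map, Finset.range_val,
    show (Multiset.range mu.length) = ↑(List.range mu.length) from rfl, Multiset.map_coe]
  congr 1
  apply List.ext_getElem
  · simp
  · intro i h1 h2
    simp only [List.getElem_map, List.getElem_range, Function.comp_apply,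
      Function.Embedding.coeFn_mk]
    rw [hval i h2]
    exact List.getD_eq_getElem _ _ h2

lemma asm_self (K : Type*) [Field K] (lam mu : List ℕ) (N : ℕ) (hN : lam.length ≤ N)
    (hmu : ∀ x ∈ mu, 0 < x) :
    asm K lam mu (expN lam mu N) = 1 := by
  have h1 : ∀ i : ℕ, ∀ h : i < lam.length, expN lam mu N i = lam.get ⟨i, h⟩ := by
    intro i h
    rw [expN_apply, if_pos h, List.getD_eq_getElem _ _ h]; rfl
  have h2 := filt lam mu N hN hmu
  simp only [asm, if_pos (And.intro h1 h2)]

lemma asm_ne (K : Type*) [Field K] (lam mu lam' mu' : List ℕ) (N : ℕ)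
    (hN : lam.length ≤ N) (hN' : lam'.length ≤ N)
    (hlam' : ∀ h : lam' ≠ [], lam'.getLast h ≠ 0)
    (hmu : ∀ x ∈ mu, 0 < x)
    (hmu' : mu'.Pairwise (· ≥ ·)) (hmus : mu.Pairwise (· ≥ ·))
    (hval : asm K lam' mu' (expN lam mu N) ≠ 0) :
    lam'.length < lam.length ∨ (lam' = lam ∧ mu' = mu) := by
  simp only [asm] at hval
  split at hval
  case isFalse => exact absurd rfl hval
  case isTrue hcond =>
  obtain ⟨h1, h2⟩ := hcond
  rcases lt_trichotomy lam'.length lam.length with h | h | h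
  · exact Or.inl h
  · -- equal lengths
    have hlameq : lam' = lam := by
      apply List.ext_get h
      intro i hi1 hi2
      have := h1 i hi1
      rw [expN_apply, if_pos hi2, List.getD_eq_getElem _ _ hi2] at this
      exact this.symm
    right
    refine ⟨hlameq, ?_⟩
    rw [hlameq] at h2
    rw [filt lam mu N hN hmu] at h2
    have hperm : List.Perm mu' mu := Multiset.coe_eq_coe.mp h2.symm
    exact hperm.eq_of_pairwise' hmu' hmus
  · -- lam'.length > lam.length : contradiction
    exfalso
    have hne : lam' ≠ [] := by
      intro hc; rw [hc] at h; simp at h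
    have hlt : lam'.length - 1 < lam'.length := by
      cases lam' with
      | nil => exact absurd rfl hne
      | cons a t => simp
    have := h1 (lam'.length - 1) hlt
    rw [expN_apply, if_neg (by omega), if_neg (by omega)] at this
    have hlast : lam'.getLast hne = lam'.get ⟨lam'.length - 1, hlt⟩ := by
      rw [List.getLast_eq_getElem]; rfl
    exact hlam' hne (by rw [hlast, ← this])

/-- The family of almost symmetric monomials `m_{(λ|μ)}`, indexed over all pairs of a strict
composition `λ` and a partition `μ`, is linearly independent over `K` in
`MvPowerSeries ℕ K`. -/
theorem statement10 (K : Type*) [Field K] :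
    LinearIndependent K (fun p : StrictComp × PartitionL => asm K p.1.1 p.2.1) := by
  rw [linearIndependent_iff']
  intro s g hsum p hp
  set N := (s.sup fun q => q.1.1.length) + 1 with hNdef
  have hN : ∀ q ∈ s, q.1.1.length < N := fun q hq =>
    Nat.lt_succ_of_le (Finset.le_sup (f := fun q : StrictComp × PartitionL => q.1.1.length) hq)
  suffices h : ∀ n, ∀ p ∈ s, p.1.1.length = n → g p = 0 from h _ p hp rfl
  intro n
  induction n using Nat.strong_induction_on with
  | _ n ih =>
    intro p hp hlen
    have hE := congrArg (MvPowerSeries.coeff (expN p.1.1 p.2.1 N)) hsum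
    rw [map_sum, map_zero] at hE
    rw [Finset.sum_eq_single p] at hE
    · rw [map_smul, smul_eq_mul] at hE
      have hco : MvPowerSeries.coeff (expN p.1.1 p.2.1 N) (asm K p.1.1 p.2.1)
          = asm K p.1.1 p.2.1 (expN p.1.1 p.2.1 N) := rfl
      rw [hco, asm_self K p.1.1 p.2.1 N (le_of_lt (hN p hp)) p.2.2.2, mul_one] at hE
      exact hE
    · intro q hq hqp
      rw [map_smul, smul_eq_mul]
      have hco : MvPowerSeries.coeff (expN p.1.1 p.2.1 N) (asm K q.1.1 q.2.1)
          = asm K q.1.1 q.2.1 (expN p.1.1 p.2.1 N) := rfl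
      rw [hco]
      by_cases hz : asm K q.1.1 q.2.1 (expN p.1.1 p.2.1 N) = 0
      · rw [hz, mul_zero]
      · rcases asm_ne K p.1.1 p.2.1 q.1.1 q.2.1 N (le_of_lt (hN p hp)) (le_of_lt (hN q hq))
          q.1.2 p.2.2.2 q.2.2.1 p.2.2.1 hz with hlt | ⟨hl, hm⟩
        · rw [ih _ (hlen ▸ hlt) q hq rfl, zero_mul]
        · exfalso
          apply hqp
          have e1 : q.1 = p.1 := Subtype.ext hl
          have e2 : q.2 = p.2 := Subtype.ext hm
          exact Prod.ext e1 e2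
    · intro hps; exact absurd hp hps

end
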